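/- For all positive integers n and p, the sum of the p-th powers of the first n positive integers satisfies Σ_{k=1}^{n} k^p = Σ_{j=0}^{p} (-1)^{p+j} · j! · {p+1, j+1} · C(n+j+1, j+1), where {p+1, j+1} is the Stirling number of the second kind and C(n+j+1, j+1) is the binomial coefficient. -/

import Mathlib

/-- Stirling numbers of the second kind: `{n, k}` counts partitions of an
`n`-element set into `k` non-empty blocks. -/
def stirlingSecond : ℕ → ℕ → ℕ
  | 0, 0 => 1
  | 0, _ + 1 => 0
  | _ + 1, 0 => 0
  | n + 1, k + 1 => (k + 1) * stirlingSecond n (k + 1) + stirlingSecond n k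

lemma stirlingSecond_succ_zero (n : ℕ) : stirlingSecond (n + 1) 0 = 0 := rfl

lemma stirlingSecond_succ_succ (n k : ℕ) :
    stirlingSecond (n + 1) (k + 1) = (k + 1) * stirlingSecond n (k + 1) + stirlingSecond n k := rfl

lemma stirlingSecond_eq_zero_of_lt : ∀ n k : ℕ, n < k → stirlingSecond n k = 0
  | 0, 0, h => by omega
  | 0, k + 1, _ => rfl
  | n + 1, 0, h => by omega
  | n + 1, k + 1, h => by
    rw [stirlingSecond_succ_succ, stirlingSecond_eq_zero_of_lt n (k+1) (by omega),
      stirlingSecond_eq_zero_of_lt n k (by omega)]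
    ring

/-- ascending factorial over ℤ -/
def asc (x : ℤ) : ℕ → ℤ
  | 0 => 1
  | k + 1 => asc x k * (x + k)

lemma asc_zero (x : ℤ) : asc x 0 = 1 := rfl
lemma asc_succ (x : ℤ) (k : ℕ) : asc x (k + 1) = asc x k * (x + k) := rfl

lemma asc_succ_left (x : ℤ) : ∀ j : ℕ, asc x (j + 1) = x * asc (x + 1) j
  | 0 => by simp [asc]
  | j + 1 => by
    rw [asc_succ, asc_succ_left x j, asc_succ]
    push_cast
    ring

lemma asc_cast (a : ℕ) : ∀ j : ℕ, asc (a : ℤ) j = (a.ascFactorial j : ℤ)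
  | 0 => rfl
  | j + 1 => by
    rw [asc_succ, asc_cast a j, Nat.ascFactorial_succ]
    push_cast
    ring

lemma power_asc (m : ℕ) (x : ℤ) :
    x ^ m = ∑ k ∈ Finset.range (m + 1),
      (-1 : ℤ) ^ (m + k) * stirlingSecond m k * asc x k := by
  induction m with
  | zero => simp [stirlingSecond, asc]
  | succ m ih =>
    have key : x ^ (m + 1) = ∑ k ∈ Finset.range (m + 1),
        ((-1 : ℤ) ^ (m + k) * stirlingSecond m k * asc x (k + 1)
          - (-1 : ℤ) ^ (m + k) * k * stirlingSecond m k * asc x k) := by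
      rw [pow_succ, ih, Finset.sum_mul]
      refine Finset.sum_congr rfl fun k _ => ?_
      rw [asc_succ]
      ring
    rw [key, Finset.sum_sub_distrib]
    rw [Finset.sum_range_succ' (fun j => (-1 : ℤ) ^ (m + 1 + j) * stirlingSecond (m+1) j * asc x j) (m+1)]
    rw [show ((-1 : ℤ) ^ (m + 1 + 0) * stirlingSecond (m+1) 0 * asc x 0) = 0 by
      rw [stirlingSecond_succ_zero]; push_cast; ring]
    rw [add_zero]
    have expand : ∀ k ∈ Finset.range (m + 1),
        (-1 : ℤ) ^ (m + 1 + (k + 1)) * stirlingSecond (m+1) (k+1) * asc x (k + 1)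
          = (-1 : ℤ) ^ (m + k) * stirlingSecond m k * asc x (k + 1)
            + (-1 : ℤ) ^ (m + k) * (k + 1) * stirlingSecond m (k + 1) * asc x (k + 1) := by
      intro k _
      rw [stirlingSecond_succ_succ, show m + 1 + (k + 1) = m + k + 2 by ring, pow_add]
      push_cast
      ring
    rw [Finset.sum_congr rfl expand, Finset.sum_add_distrib, sub_eq_add_neg]
    congr 1
    -- need: -∑ (-1)^(m+k) k S m k asc x k = ∑ (-1)^(m+k) (k+1) S m (k+1) asc x (k+1)
    set g : ℕ → ℤ := fun j => -((-1 : ℤ) ^ (m + j) * j * stirlingSecond m j * asc x j) with hg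
    have h1 : -∑ k ∈ Finset.range (m+1), (-1 : ℤ) ^ (m + k) * k * stirlingSecond m k * asc x k
        = ∑ k ∈ Finset.range (m+1), g k := by
      rw [← Finset.sum_neg_distrib]
    have h2 : ∑ k ∈ Finset.range (m+2), g k = ∑ k ∈ Finset.range (m+1), g k := by
      rw [Finset.sum_range_succ, hg]
      simp only [stirlingSecond_eq_zero_of_lt m (m+1) (by omega)]
      push_cast
      ring
    have h3 : ∑ k ∈ Finset.range (m+2), g k = ∑ k ∈ Finset.range (m+1), g (k+1) := by
      rw [Finset.sum_range_succ' g (m+1), hg]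
      simp
    rw [h1, ← h2, h3]
    refine Finset.sum_congr rfl fun k _ => ?_
    rw [hg]
    show -((-1 : ℤ) ^ (m + (k+1)) * (k+1) * stirlingSecond m (k+1) * asc x (k+1)) = _
    rw [show m + (k + 1) = m + k + 1 by ring, pow_succ]
    push_cast
    ring

lemma zero_sum (p : ℕ) (hp : 0 < p) :
    ∑ j ∈ Finset.range (p + 1), (-1 : ℤ) ^ j * Nat.factorial j * stirlingSecond (p + 1) (j + 1)
      = 0 := by
  set h : ℕ → ℤ := fun j => (-1 : ℤ) ^ j * Nat.factorial j * stirlingSecond p j with hh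
  have expand : ∀ j ∈ Finset.range (p + 1),
      (-1 : ℤ) ^ j * Nat.factorial j * stirlingSecond (p + 1) (j + 1)
        = -h (j + 1) + h j := by
    intro j _
    rw [stirlingSecond_succ_succ, hh]
    simp only [Nat.factorial_succ, pow_succ]
    push_cast
    ring
  rw [Finset.sum_congr rfl expand, Finset.sum_add_distrib]
  have h0 : h 0 = 0 := by
    rw [hh]
    obtain ⟨q, rfl⟩ : ∃ q, p = q + 1 := ⟨p - 1, by omega⟩
    simp [stirlingSecond_succ_zero]
  have htop : h (p + 1) = 0 := by
    rw [hh]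
    simp [stirlingSecond_eq_zero_of_lt p (p + 1) (by omega)]
  have h3 : ∑ j ∈ Finset.range (p + 1), h (j + 1) = ∑ j ∈ Finset.range (p + 1), h j := by
    have := Finset.sum_range_succ' h (p + 1)
    rw [h0, add_zero] at this
    rw [← this, Finset.sum_range_succ, htop, add_zero]
  rw [Finset.sum_neg_distrib, h3]
  ring

theorem sum_powers_eq_alt_sum_stirlingSecond_choose (n p : ℕ) (hn : 0 < n) (hp : 0 < p) :
    (∑ k ∈ Finset.Icc 1 n, (k : ℤ) ^ p) =
      ∑ j ∈ Finset.range (p + 1),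
        (-1 : ℤ) ^ (p + j) * Nat.factorial j * stirlingSecond (p + 1) (j + 1) *
          Nat.choose (n + j + 1) (j + 1) := by
  clear hn
  induction n with
  | zero =>
    rw [Finset.Icc_eq_empty (by omega : ¬ (1:ℕ) ≤ 0), Finset.sum_empty]
    have : ∀ j ∈ Finset.range (p + 1),
        (-1 : ℤ) ^ (p + j) * Nat.factorial j * stirlingSecond (p + 1) (j + 1) *
          Nat.choose (0 + j + 1) (j + 1)
        = (-1 : ℤ) ^ p * ((-1 : ℤ) ^ j * Nat.factorial j * stirlingSecond (p + 1) (j + 1)) := by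
      intro j _
      rw [show 0 + j + 1 = j + 1 by omega, Nat.choose_self, pow_add]
      push_cast
      ring
    rw [Finset.sum_congr rfl this, ← Finset.mul_sum, zero_sum p hp, mul_zero]
  | succ n ih =>
    rw [Finset.sum_Icc_succ_top (by omega : 1 ≤ n + 1), ih]
    -- key polynomial identity at x = n + 1
    have hmain : ((n : ℤ) + 1) ^ p
        = ∑ j ∈ Finset.range (p + 1),
            (-1 : ℤ) ^ (p + j) * stirlingSecond (p + 1) (j + 1) * asc ((n : ℤ) + 2) j := by
      apply mul_left_cancel₀ (show ((n : ℤ) + 1) ≠ 0 by positivity)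
      have h := power_asc (p + 1) ((n : ℤ) + 1)
      rw [Finset.sum_range_succ'
        (fun k => (-1 : ℤ) ^ (p + 1 + k) * stirlingSecond (p + 1) k * asc ((n : ℤ) + 1) k)
        (p + 1)] at h
      rw [show ((-1 : ℤ) ^ (p + 1 + 0) * stirlingSecond (p + 1) 0 * asc ((n : ℤ) + 1) 0) = 0 by
        rw [stirlingSecond_succ_zero]; push_cast; ring, add_zero] at h
      rw [← pow_succ', h, Finset.mul_sum]
      refine Finset.sum_congr rfl fun j _ => ?_
      rw [asc_succ_left, show ((n : ℤ) + 1 + 1) = (n : ℤ) + 2 by ring,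
        show p + 1 + (j + 1) = p + j + 2 by ring, show p + j + 2 = (p + j) + 2 by ring,
        pow_add]
      ring
    have hterm : ∀ j : ℕ,
        ((Nat.factorial j : ℤ)) * (Nat.choose (n + 1 + j + 1) (j + 1))
          = (Nat.factorial j : ℤ) * Nat.choose (n + j + 1) (j + 1) + asc ((n : ℤ) + 2) j := by
      intro j
      have hasc : (n + 2).ascFactorial j = Nat.factorial j * (n + j + 1).choose j := by
        have := Nat.ascFactorial_eq_factorial_mul_choose (n + 1) j
        rw [show n + 1 + 1 = n + 2 by omega, show n + 1 + j = n + j + 1 by omega] at this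
        exact this
      have hcast : asc ((n : ℤ) + 2) j = ((n + 2 : ℕ).ascFactorial j : ℤ) := by
        rw [← asc_cast]
        push_cast
        ring_nf
      rw [hcast, hasc, show n + 1 + j + 1 = (n + j + 1) + 1 by omega,
        Nat.choose_succ_succ (n + j + 1) j]
      push_cast
      ring
    have : ∑ j ∈ Finset.range (p + 1),
        (-1 : ℤ) ^ (p + j) * Nat.factorial j * stirlingSecond (p + 1) (j + 1) *
          Nat.choose (n + 1 + j + 1) (j + 1)
        = (∑ j ∈ Finset.range (p + 1),
            (-1 : ℤ) ^ (p + j) * Nat.factorial j * stirlingSecond (p + 1) (j + 1) *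
              Nat.choose (n + j + 1) (j + 1))
          + ∑ j ∈ Finset.range (p + 1),
              (-1 : ℤ) ^ (p + j) * stirlingSecond (p + 1) (j + 1) * asc ((n : ℤ) + 2) j := by
      rw [← Finset.sum_add_distrib]
      refine Finset.sum_congr rfl fun j _ => ?_
      linear_combination ((-1 : ℤ) ^ (p + j) * stirlingSecond (p + 1) (j + 1)) * hterm j
    rw [this, ← hmain]
    push_cast
    ring
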